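/- For i ∈ {1,2,3}, ξ ∈ ℝ³ with ξ ≠ 0, g ∈ ℝ, and w ∈ ℝ³ with ⟨ξ, w⟩ = 0, one has ‖(ξᵢ/‖ξ‖²)·(g·ξ − ξ × w)‖² ≤ g² + ‖w‖². Consequently the symbol (g, w) ↦ −(ξᵢ/‖ξ‖²)·(g·ξ − ξ × w), which sends (div v, curl v) to the i-th partial derivative of v on the Fourier side, is bounded uniformly in ξ. -/

import Mathlib

noncomputable section

open MeasureTheory Real

/-- Euclidean 3-space. -/
abbrev E3 : Type := EuclideanSpace ℝ (Fin 3)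

/-- Build a vector in `E3` from three coordinates. -/
def mk3 (a b c : ℝ) : E3 := (WithLp.equiv 2 (Fin 3 → ℝ)).symm ![a, b, c]

/-- Partial derivative in the `i`-th coordinate direction. -/
def pd (i : Fin 3) (f : E3 → ℝ) (x : E3) : ℝ :=
  fderiv ℝ f x (EuclideanSpace.single i 1)

/-- Curl of a vector field on `ℝ³`. -/
def ecurl (f : E3 → E3) (x : E3) : E3 :=
  mk3 (pd 1 (fun y => f y 2) x - pd 2 (fun y => f y 1) x)
      (pd 2 (fun y => f y 0) x - pd 0 (fun y => f y 2) x)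
      (pd 0 (fun y => f y 1) x - pd 1 (fun y => f y 0) x)

/-- Divergence of a vector field on `ℝ³`. -/
def ediv (f : E3 → E3) (x : E3) : ℝ :=
  pd 0 (fun y => f y 0) x + pd 1 (fun y => f y 1) x + pd 2 (fun y => f y 2) x

/-- Gradient of a scalar field on `ℝ³`. -/
def egrad (h : E3 → ℝ) (x : E3) : E3 :=
  mk3 (pd 0 h x) (pd 1 h x) (pd 2 h x)

/-- Cross product on `ℝ³`. -/
def cross3 (u w : E3) : E3 :=
  mk3 (u 1 * w 2 - u 2 * w 1) (u 2 * w 0 - u 0 * w 2) (u 0 * w 1 - u 1 * w 0)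

/-- Advection `(g · ∇) f` of a vector field `f` along the vector `g`. -/
def advect (g : E3) (f : E3 → E3) (x : E3) : E3 :=
  mk3 (∑ j, g j * pd j (fun y => f y 0) x)
      (∑ j, g j * pd j (fun y => f y 1) x)
      (∑ j, g j * pd j (fun y => f y 2) x)

/-- Componentwise Laplacian of a vector field on `ℝ³`. -/
def elap (f : E3 → E3) (x : E3) : E3 :=
  mk3 (∑ i, pd i (fun y => pd i (fun z => f z 0) y) x)
      (∑ i, pd i (fun y => pd i (fun z => f z 1) y) x)
      (∑ i, pd i (fun y => pd i (fun z => f z 2) y) x)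

/-- Time derivative of a time-dependent vector field. -/
def tderiv (f : ℝ → E3 → E3) (t : ℝ) (x : E3) : E3 :=
  deriv (fun s => f s x) t


lemma norm_sq_E3 (v : E3) : ‖v‖^2 = v 0^2 + v 1^2 + v 2^2 := by
  rw [EuclideanSpace.norm_eq, Real.sq_sqrt (by positivity)]
  simp [Fin.sum_univ_three, sq_abs]

lemma mk3_apply0 (a b c : ℝ) : (mk3 a b c) 0 = a := rfl
lemma mk3_apply1 (a b c : ℝ) : (mk3 a b c) 1 = b := rfl
lemma mk3_apply2 (a b c : ℝ) : (mk3 a b c) 2 = c := rfl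

set_option maxHeartbeats 1000000 in
/-- Symbol bound for the compressible div-curl system: for `ξ ≠ 0`,
`g ∈ ℝ` and `w ⊥ ξ`, `‖(ξᵢ/‖ξ‖²)(g ξ − ξ × w)‖² ≤ g² + ‖w‖²`. -/
theorem div_curl_symbol_bound
    (i : Fin 3) (ξ : E3) (hξ : ξ ≠ 0) (g : ℝ) (w : E3)
    (hw : (inner ℝ ξ w : ℝ) = 0) :
    ‖(ξ i / ‖ξ‖^2) • (g • ξ - cross3 ξ w)‖^2 ≤ g^2 + ‖w‖^2 := by
  have hS : ‖ξ‖^2 = ξ 0^2 + ξ 1^2 + ξ 2^2 := norm_sq_E3 ξ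
  have hn : (0:ℝ) < ‖ξ‖ := norm_pos_iff.mpr hξ
  have hSpos : (0:ℝ) < ‖ξ‖^2 := by positivity
  have hW : ‖w‖^2 = w 0^2 + w 1^2 + w 2^2 := norm_sq_E3 w
  have hwc : ξ 0 * w 0 + ξ 1 * w 1 + ξ 2 * w 2 = 0 := by
    have := hw
    simp [PiLp.inner_apply, Fin.sum_univ_three, RCLike.inner_apply] at this
    linarith
  have hti : ξ i ^ 2 ≤ ‖ξ‖^2 := by
    have h1 : ξ i ^ 2 ≤ ∑ j, ξ j ^ 2 :=
      Finset.single_le_sum (fun j _ => sq_nonneg (ξ j)) (Finset.mem_univ i)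
    rw [hS]; simpa [Fin.sum_univ_three] using h1
  rw [norm_sq_E3]
  simp only [PiLp.smul_apply, PiLp.sub_apply, smul_eq_mul, cross3, mk3_apply0, mk3_apply1,
    mk3_apply2]
  have key : (g * ξ 0 - (ξ 1 * w 2 - ξ 2 * w 1)) ^ 2 + (g * ξ 1 - (ξ 2 * w 0 - ξ 0 * w 2)) ^ 2
      + (g * ξ 2 - (ξ 0 * w 1 - ξ 1 * w 0)) ^ 2 = ‖ξ‖^2 * (g^2 + ‖w‖^2) := by
    rw [hS, hW]; linear_combination (-(ξ 0 * w 0 + ξ 1 * w 1 + ξ 2 * w 2)) * hwc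
  have expand : (ξ i / ‖ξ‖ ^ 2 * (g * ξ 0 - (ξ 1 * w 2 - ξ 2 * w 1))) ^ 2 +
        (ξ i / ‖ξ‖ ^ 2 * (g * ξ 1 - (ξ 2 * w 0 - ξ 0 * w 2))) ^ 2 +
      (ξ i / ‖ξ‖ ^ 2 * (g * ξ 2 - (ξ 0 * w 1 - ξ 1 * w 0))) ^ 2
      = ξ i ^ 2 / (‖ξ‖^2)^2 * ((g * ξ 0 - (ξ 1 * w 2 - ξ 2 * w 1)) ^ 2
        + (g * ξ 1 - (ξ 2 * w 0 - ξ 0 * w 2)) ^ 2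
        + (g * ξ 2 - (ξ 0 * w 1 - ξ 1 * w 0)) ^ 2) := by ring
  rw [expand, key]
  have hgw : (0:ℝ) ≤ g^2 + ‖w‖^2 := by positivity
  rw [div_mul_eq_mul_div, div_le_iff₀ (by positivity)]
  nlinarith [mul_le_mul_of_nonneg_right hti hgw, hSpos, hgw]
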